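/- The dimension of the generalized Bergman space A_m^ν(CP^n), given by (2m+n+2ν)·Γ(m+n)Γ(m+n+2ν)/(n Γ(n)² Γ(m+1) Γ(m+2ν+1)), equals the finite sum Σ_{p=0}^{m} Σ_{q=0}^{m+2ν} d(n,p,q), where d(n,p,q) = (p+q+n-1)(p+n-2)!(q+n-2)!/(p! q! (n-1)! (n-2)!), for n ≥ 2, m ≥ 0, 2ν ∈ Z_+. -/

import Mathlib

open Real Finset

private lemma fact_ne (x : ℕ) : ((x.factorial : ℝ)) ≠ 0 :=
  Nat.cast_ne_zero.mpr x.factorial_ne_zero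

/-- Closed form for the inner sum. -/
private lemma bergman_inner_sum (k p b : ℕ) :
    ∑ q ∈ Finset.range (b + 1),
      ((p : ℝ) + q + k + 1) * (p + k).factorial * (q + k).factorial /
        (p.factorial * q.factorial * (k + 1).factorial * k.factorial)
    = (((k : ℝ) + 2) * (p + k + 1) + (k + 1) * b) * (p + k).factorial *
        (b + k + 1).factorial /
        (p.factorial * (k + 1).factorial * (k + 2).factorial * b.factorial) := by
  induction b with
  | zero =>
    rw [Finset.sum_range_one]
    simp only [Nat.zero_add, Nat.add_zero]
    rw [show k + 2 = (k + 1) + 1 from rfl, Nat.factorial_succ (k + 1),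
      Nat.factorial_succ k]
    push_cast
    field_simp [fact_ne]
    ring
  | succ b ih =>
    rw [Finset.sum_range_succ, ih]
    rw [show b + 1 + k = b + k + 1 from by omega,
      Nat.factorial_succ (b + k + 1), Nat.factorial_succ b,
      show k + 2 = (k + 1) + 1 from rfl, Nat.factorial_succ (k + 1),
      Nat.factorial_succ k]
    push_cast
    field_simp [fact_ne]
    ring

/-- Closed form for the double sum. -/
private lemma bergman_double_sum (k a b : ℕ) :
    ∑ p ∈ Finset.range (a + 1), ∑ q ∈ Finset.range (b + 1),
      ((p : ℝ) + q + k + 1) * (p + k).factorial * (q + k).factorial /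
        (p.factorial * q.factorial * (k + 1).factorial * k.factorial)
    = ((a : ℝ) + b + k + 2) * (a + k + 1).factorial * (b + k + 1).factorial /
        (((k : ℝ) + 2) * ((k + 1).factorial : ℝ) ^ 2 * a.factorial * b.factorial) := by
  induction a with
  | zero =>
    rw [Finset.sum_range_one, bergman_inner_sum]
    simp only [Nat.zero_add, Nat.add_zero]
    rw [show k + 2 = (k + 1) + 1 from rfl, Nat.factorial_succ (k + 1),
      Nat.factorial_succ k]
    push_cast
    field_simp [fact_ne]
    ring
  | succ a ih =>
    rw [Finset.sum_range_succ, ih, bergman_inner_sum]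
    rw [show a + 1 + k = a + k + 1 from by omega,
      Nat.factorial_succ (a + k + 1), Nat.factorial_succ a,
      show k + 2 = (k + 1) + 1 from rfl, Nat.factorial_succ (k + 1),
      Nat.factorial_succ k]
    push_cast
    field_simp [fact_ne]
    ring

/-- The dimension of `A_m^ν(ℂPⁿ)`,
`(2m+n+2ν) Γ(m+n) Γ(m+n+2ν) / (n Γ(n)² Γ(m+1) Γ(m+2ν+1))`,
equals `∑_{p=0}^{m} ∑_{q=0}^{m+2ν} d(n,p,q)` where
`d(n,p,q) = (p+q+n-1)(p+n-2)!(q+n-2)!/(p! q! (n-1)! (n-2)!)`,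
for `n ≥ 2`, `m ≥ 0`, `2ν = N ∈ ℤ₊`. -/
theorem dim_generalized_Bergman_space (n m N : ℕ) (hn : 2 ≤ n) :
    ((2 * m + n + N : ℝ) * Real.Gamma (m + n) * Real.Gamma (m + n + N)) /
      (n * Real.Gamma n ^ 2 * Real.Gamma (m + 1) * Real.Gamma (m + N + 1)) =
    ∑ p ∈ Finset.range (m + 1), ∑ q ∈ Finset.range (m + N + 1),
      (((p + q + n - 1 : ℕ) * (p + n - 2).factorial * (q + n - 2).factorial : ℕ) : ℝ) /
        ((p.factorial * q.factorial * (n - 1).factorial * (n - 2).factorial : ℕ) : ℝ) := by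
  obtain ⟨k, rfl⟩ : ∃ k, n = k + 2 := ⟨n - 2, by omega⟩
  have hG1 : Real.Gamma ((m : ℝ) + (k + 2 : ℕ)) = ((m + k + 1).factorial : ℝ) := by
    rw [show ((m : ℝ) + (k + 2 : ℕ)) = ((m + k + 1 : ℕ) : ℝ) + 1 by push_cast; ring,
      Real.Gamma_nat_eq_factorial]
  have hG2 : Real.Gamma ((m : ℝ) + (k + 2 : ℕ) + N) = ((m + N + k + 1).factorial : ℝ) := by
    rw [show ((m : ℝ) + (k + 2 : ℕ) + N) = ((m + N + k + 1 : ℕ) : ℝ) + 1 by push_cast; ring,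
      Real.Gamma_nat_eq_factorial]
  have hG3 : Real.Gamma ((k + 2 : ℕ) : ℝ) = ((k + 1).factorial : ℝ) := by
    rw [show (((k + 2 : ℕ)) : ℝ) = ((k + 1 : ℕ) : ℝ) + 1 by push_cast; ring,
      Real.Gamma_nat_eq_factorial]
  have hG4 : Real.Gamma ((m : ℝ) + 1) = (m.factorial : ℝ) := by
    rw [show ((m : ℝ) + 1) = ((m : ℕ) : ℝ) + 1 by push_cast; ring,
      Real.Gamma_nat_eq_factorial]
  have hG5 : Real.Gamma ((m : ℝ) + N + 1) = ((m + N).factorial : ℝ) := by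
    rw [show ((m : ℝ) + N + 1) = ((m + N : ℕ) : ℝ) + 1 by push_cast; ring,
      Real.Gamma_nat_eq_factorial]
  rw [hG1, hG2, hG3, hG4, hG5]
  have hsum : ∑ p ∈ Finset.range (m + 1), ∑ q ∈ Finset.range (m + N + 1),
      (((p + q + (k + 2) - 1 : ℕ) * (p + (k + 2) - 2).factorial *
          (q + (k + 2) - 2).factorial : ℕ) : ℝ) /
        ((p.factorial * q.factorial * ((k + 2) - 1).factorial *
          ((k + 2) - 2).factorial : ℕ) : ℝ)
      = ∑ p ∈ Finset.range (m + 1), ∑ q ∈ Finset.range (m + N + 1),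
        ((p : ℝ) + q + k + 1) * (p + k).factorial * (q + k).factorial /
          (p.factorial * q.factorial * (k + 1).factorial * k.factorial) := by
    refine Finset.sum_congr rfl fun p _ => Finset.sum_congr rfl fun q _ => ?_
    rw [show p + q + (k + 2) - 1 = p + q + k + 1 from by omega,
      show p + (k + 2) - 2 = p + k from by omega,
      show q + (k + 2) - 2 = q + k from by omega,
      show (k + 2) - 1 = k + 1 from by omega,
      show (k + 2) - 2 = k from by omega]
    push_cast
    ring
  rw [hsum, bergman_double_sum k m (m + N)]
  rw [show m + N + k + 1 = (m + N) + k + 1 from by omega]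
  field_simp [fact_ne]
  push_cast
  ring
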